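/- Let P be a poset and 𝓜, 𝓝 minimal subset selections on P. If the 𝓜𝓝-convergence structure in P is topological (every net converging to x in the topology τ_𝓜𝓝 also 𝓜𝓝-converges to x), then P is 𝓜𝓝-continuous. -/

import Mathlib

universe u

/-- A directed preordered index for a net. -/
structure IsDirNet {I : Type u} (r : I → I → Prop) : Prop where
  refl : ∀ i, r i i
  trans : ∀ {i j k : I}, r i j → r j k → r i k
  nonempty : Nonempty I
  directed : ∀ i j, ∃ k, r i k ∧ r j k

/-- A minimal subset selection on a poset `P`. -/
def MinSel {P : Type u} [PartialOrder P] (M : Set (Set P)) : Prop :=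
  (∅ : Set P) ∉ M ∧ ∀ x : P, {x} ∈ M

/-- The net `f : I → P` `𝓜𝓝`-converges to `x`. -/
def MNConv {P : Type u} [PartialOrder P] (M N : Set (Set P))
    {I : Type u} (r : I → I → Prop) (f : I → P) (x : P) : Prop :=
  ∃ A S : Set P, A ∈ M ∧ S ∈ N ∧ IsLUB A x ∧ IsGLB S x ∧
    ∀ a ∈ A, ∀ s ∈ S, ∃ i₀, ∀ i, r i₀ i → a ≤ f i ∧ f i ≤ s

/-- The topology `τ_𝓜𝓝` induced by `𝓜𝓝`-convergence. -/
def mnTop {P : Type u} [PartialOrder P] (M N : Set (Set P)) : Set (Set P) :=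
  {U | ∀ (I : Type u) (r : I → I → Prop) (f : I → P) (x : P),
      IsDirNet r → MNConv M N r f x → x ∈ U → ∃ i₀, ∀ i, r i₀ i → f i ∈ U}

/-- The `𝓜𝓝`-convergence structure is topological. -/
def MNTopological {P : Type u} [PartialOrder P] (M N : Set (Set P)) : Prop :=
  ∀ (I : Type u) (r : I → I → Prop) (f : I → P) (x : P), IsDirNet r →
    (∀ U ∈ mnTop M N, x ∈ U → ∃ i₀, ∀ i, r i₀ i → f i ∈ U) →
    MNConv M N r f x

/-- The relation `x ≪_𝓜𝓝 y`. -/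
def wbMN {P : Type u} [PartialOrder P] (M N : Set (Set P)) (x y : P) : Prop :=
  ∀ A S : Set P, A ∈ M → S ∈ N → IsLUB A y → IsGLB S y →
    ∃ B T : Set P, B.Nonempty ∧ B.Finite ∧ B ⊆ A ∧ T.Nonempty ∧ T.Finite ∧ T ⊆ S ∧
      upperBounds B ∩ lowerBounds T ⊆ Set.Ici x

/-- The relation `y ◁_𝓜𝓝 z`. -/
def triMN {P : Type u} [PartialOrder P] (M N : Set (Set P)) (y z : P) : Prop :=
  ∀ A S : Set P, A ∈ M → S ∈ N → IsLUB A y → IsGLB S y →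
    ∃ B T : Set P, B.Nonempty ∧ B.Finite ∧ B ⊆ A ∧ T.Nonempty ∧ T.Finite ∧ T ⊆ S ∧
      upperBounds B ∩ lowerBounds T ⊆ Set.Iic z

/-- `𝓜𝓝`-continuity of the poset `P`. -/
def MNCont {P : Type u} [PartialOrder P] (M N : Set (Set P)) : Prop :=
  ∀ x y : P,
    (∃ A S : Set P, A ∈ M ∧ S ∈ N ∧ A ⊆ {w | wbMN M N w x} ∧
      S ⊆ {w | triMN M N x w} ∧ IsLUB A x ∧ IsGLB S x) ∧
    ({w | wbMN M N x w} ∩ {w | triMN M N w y}) ∈ mnTop M N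

section
variable {P : Type u} [PartialOrder P] {M N : Set (Set P)}

lemma univ_mem_mnTop : Set.univ ∈ mnTop M N := by
  intro I r f x hdir _ _
  obtain ⟨i⟩ := hdir.nonempty
  exact ⟨i, fun j _ => trivial⟩

lemma inter_mem_mnTop {U V : Set P} (hU : U ∈ mnTop M N) (hV : V ∈ mnTop M N) :
    U ∩ V ∈ mnTop M N := by
  intro I r f x hdir hconv hx
  obtain ⟨i₁, h₁⟩ := hU I r f x hdir hconv hx.1
  obtain ⟨i₂, h₂⟩ := hV I r f x hdir hconv hx.2
  obtain ⟨k, hk1, hk2⟩ := hdir.directed i₁ i₂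
  exact ⟨k, fun j hj => ⟨h₁ j (hdir.trans hk1 hj), h₂ j (hdir.trans hk2 hj)⟩⟩

lemma biInter_mem_mnTop {α : Type*} {s : Set α} (hs : s.Finite) {g : α → Set P}
    (h : ∀ a ∈ s, g a ∈ mnTop M N) : (⋂ a ∈ s, g a) ∈ mnTop M N := by
  revert h
  refine Set.Finite.induction_on s hs ?_ ?_
  · intro _
    simpa using (univ_mem_mnTop (M := M) (N := N))
  · intro a s ha hs ih h
    rw [Set.biInter_insert]
    exact inter_mem_mnTop (h _ (Set.mem_insert _ _))
      (ih fun a has => h a (Set.mem_insert_of_mem _ has))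

end

section
variable {P : Type u} [PartialOrder P] {M N : Set (Set P)}

/-- Key: topologicity yields witnesses with open order-intervals around each point. -/
lemma key_lemma (htop : MNTopological M N) (z : P) :
    ∃ A S : Set P, A ∈ M ∧ S ∈ N ∧ IsLUB A z ∧ IsGLB S z ∧
      ∀ a ∈ A, ∀ s ∈ S, ∃ U ∈ mnTop M N, z ∈ U ∧ U ⊆ Set.Icc a s := by
  let I : Type u := {q : Set P × P // q.1 ∈ mnTop M N ∧ z ∈ q.1 ∧ q.2 ∈ q.1}
  let r : I → I → Prop := fun i j => j.1.1 ⊆ i.1.1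
  have hdir : IsDirNet r := by
    refine ⟨fun i => subset_refl _, fun h1 h2 => h2.trans h1,
      ⟨⟨(Set.univ, z), univ_mem_mnTop, trivial, trivial⟩⟩, fun i j => ?_⟩
    refine ⟨⟨(i.1.1 ∩ j.1.1, z), inter_mem_mnTop i.2.1 j.2.1,
      ⟨i.2.2.1, j.2.2.1⟩, ⟨i.2.2.1, j.2.2.1⟩⟩, ?_, ?_⟩
    · exact Set.inter_subset_left
    · exact Set.inter_subset_right
  let f : I → P := fun i => i.1.2
  have hconv : ∀ U ∈ mnTop M N, z ∈ U → ∃ i₀, ∀ i, r i₀ i → f i ∈ U := by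
    intro U hU hz
    exact ⟨⟨(U, z), hU, hz, hz⟩, fun i hi => hi i.2.2.2⟩
  obtain ⟨A, S, hA, hS, hlub, hglb, hev⟩ := htop I r f z hdir hconv
  refine ⟨A, S, hA, hS, hlub, hglb, fun a ha s hs => ?_⟩
  obtain ⟨i₀, hi₀⟩ := hev a ha s hs
  refine ⟨i₀.1.1, i₀.2.1, i₀.2.2.1, fun p hp => ?_⟩
  have := hi₀ ⟨(i₀.1.1, p), i₀.2.1, i₀.2.2.1, hp⟩ (subset_refl _)
  exact ⟨this.1, this.2⟩

end

section
variable {P : Type u} [PartialOrder P] {M N : Set (Set P)}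

lemma net_of_finsets {A S : Set P} (hA : A ∈ M) (hS : S ∈ N) {w : P}
    (hlub : IsLUB A w) (hglb : IsGLB S w) (hM : MinSel M) (hN : MinSel N)
    {Q : P → Prop}
    (hsel : ∀ (B T : Finset P), ↑B ⊆ A → ↑T ⊆ S → B.Nonempty → T.Nonempty →
      ∃ p, p ∈ upperBounds (↑B : Set P) ∧ p ∈ lowerBounds (↑T : Set P) ∧ ¬ Q p)
    {U : Set P} (hU : U ∈ mnTop M N) (hQU : ∀ p ∈ U, Q p) (hw : w ∈ U) : False := by
  classical
  let J : Type u := {q : Finset P × Finset P //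
    ↑q.1 ⊆ A ∧ ↑q.2 ⊆ S ∧ q.1.Nonempty ∧ q.2.Nonempty}
  let r : J → J → Prop := fun i j => i.1.1 ⊆ j.1.1 ∧ i.1.2 ⊆ j.1.2
  have hAne : A.Nonempty := Set.nonempty_iff_ne_empty.2 (fun h => hM.1 (h ▸ hA))
  have hSne : S.Nonempty := Set.nonempty_iff_ne_empty.2 (fun h => hN.1 (h ▸ hS))
  obtain ⟨a₀, ha₀⟩ := hAne
  obtain ⟨s₀, hs₀⟩ := hSne
  have hdir : IsDirNet r := by
    refine ⟨fun i => ⟨subset_refl _, subset_refl _⟩,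
      fun h1 h2 => ⟨h1.1.trans h2.1, h1.2.trans h2.2⟩,
      ⟨⟨({a₀}, {s₀}), by simpa using ha₀, by simpa using hs₀,
        Finset.singleton_nonempty _, Finset.singleton_nonempty _⟩⟩, fun i j => ?_⟩
    refine ⟨⟨(i.1.1 ∪ j.1.1, i.1.2 ∪ j.1.2), ?_, ?_, ?_, ?_⟩, ?_, ?_⟩
    · push_cast; exact Set.union_subset i.2.1 j.2.1
    · push_cast; exact Set.union_subset i.2.2.1 j.2.2.1
    · exact i.2.2.2.1.mono Finset.subset_union_left
    · exact i.2.2.2.2.mono Finset.subset_union_left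
    · exact ⟨Finset.subset_union_left, Finset.subset_union_left⟩
    · exact ⟨Finset.subset_union_right, Finset.subset_union_right⟩
  let g : J → P := fun j => (hsel j.1.1 j.1.2 j.2.1 j.2.2.1 j.2.2.2.1 j.2.2.2.2).choose
  have hg : ∀ j : J, g j ∈ upperBounds (↑j.1.1 : Set P) ∧
      g j ∈ lowerBounds (↑j.1.2 : Set P) ∧ ¬ Q (g j) := fun j =>
    (hsel j.1.1 j.1.2 j.2.1 j.2.2.1 j.2.2.2.1 j.2.2.2.2).choose_spec
  have hconv : MNConv M N r g w := by
    refine ⟨A, S, hA, hS, hlub, hglb, fun a ha s hs => ?_⟩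
    refine ⟨⟨({a}, {s}), by simpa using ha, by simpa using hs,
      Finset.singleton_nonempty _, Finset.singleton_nonempty _⟩, fun j hj => ?_⟩
    constructor
    · exact (hg j).1 (by exact_mod_cast hj.1 (Finset.mem_singleton_self a))
    · exact (hg j).2.1 (by exact_mod_cast hj.2 (Finset.mem_singleton_self s))
  obtain ⟨i₀, hi₀⟩ := hU J r g w hdir hconv hw
  exact (hg i₀).2.2 (hQU _ (hi₀ i₀ (hdir.refl i₀)))

lemma lemA (hM : MinSel M) (hN : MinSel N) {U : Set P} (hU : U ∈ mnTop M N) {a : P}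
    (haU : U ⊆ Set.Ici a) {w : P} (hw : w ∈ U) : wbMN M N a w := by
  intro A S hA hS hlub hglb
  by_contra hcon
  refine net_of_finsets hA hS hlub hglb hM hN (Q := fun p => a ≤ p)
    (fun B T hBA hTS hBne hTne => ?_) hU (fun p hp => haU hp) hw
  by_contra hp
  push_neg at hp
  exact hcon ⟨↑B, ↑T, Finset.coe_nonempty.2 hBne, B.finite_toSet, hBA,
    Finset.coe_nonempty.2 hTne, T.finite_toSet, hTS, fun q hq => hp q hq.1 hq.2⟩

lemma lemB (hM : MinSel M) (hN : MinSel N) {U : Set P} (hU : U ∈ mnTop M N) {s : P}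
    (hsU : U ⊆ Set.Iic s) {w : P} (hw : w ∈ U) : triMN M N w s := by
  intro A S hA hS hlub hglb
  by_contra hcon
  refine net_of_finsets hA hS hlub hglb hM hN (Q := fun p => p ≤ s)
    (fun B T hBA hTS hBne hTne => ?_) hU (fun p hp => hsU hp) hw
  by_contra hp
  push_neg at hp
  exact hcon ⟨↑B, ↑T, Finset.coe_nonempty.2 hBne, B.finite_toSet, hBA,
    Finset.coe_nonempty.2 hTne, T.finite_toSet, hTS, fun q hq => hp q hq.1 hq.2⟩

end

/-- If the 𝓜𝓝-convergence structure is topological, then `P` is 𝓜𝓝-continuous. -/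
theorem stmt_16 {P : Type u} [PartialOrder P] (M N : Set (Set P))
    (hM : MinSel M) (hN : MinSel N) (htop : MNTopological M N) : MNCont M N := by
  intro x y
  constructor
  · obtain ⟨A, S, hA, hS, hlub, hglb, hopen⟩ := key_lemma htop x
    obtain ⟨a₀, ha₀⟩ : A.Nonempty := Set.nonempty_iff_ne_empty.2 (fun h => hM.1 (h ▸ hA))
    obtain ⟨s₀, hs₀⟩ : S.Nonempty := Set.nonempty_iff_ne_empty.2 (fun h => hN.1 (h ▸ hS))
    refine ⟨A, S, hA, hS, ?_, ?_, hlub, hglb⟩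
    · intro a ha
      obtain ⟨U, hUo, hxU, hUsub⟩ := hopen a ha s₀ hs₀
      exact lemA hM hN hUo (fun p hp => (hUsub hp).1) hxU
    · intro s hs
      obtain ⟨U, hUo, hxU, hUsub⟩ := hopen a₀ ha₀ s hs
      exact lemB hM hN hUo (fun p hp => (hUsub hp).2) hxU
  · intro I r f z hdir hconv hz
    obtain ⟨A₀, S₀, hA₀, hS₀, hlub₀, hglb₀, hopen⟩ := key_lemma htop z
    have hopen' : ∀ a s : P, ∃ U, U ∈ mnTop M N ∧ z ∈ U ∧
        (a ∈ A₀ → s ∈ S₀ → U ⊆ Set.Icc a s) := by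
      intro a s
      by_cases h : a ∈ A₀ ∧ s ∈ S₀
      · obtain ⟨U, h1, h2, h3⟩ := hopen a h.1 s h.2
        exact ⟨U, h1, h2, fun _ _ => h3⟩
      · exact ⟨Set.univ, univ_mem_mnTop, trivial, fun ha hs => absurd ⟨ha, hs⟩ h⟩
    choose u hu1 hu2 hu3 using hopen'
    obtain ⟨B, T, hBne, hBfin, hBA, hTne, hTfin, hTS, hBT⟩ :=
      hz.1 A₀ S₀ hA₀ hS₀ hlub₀ hglb₀
    obtain ⟨B', T', hB'ne, hB'fin, hB'A, hT'ne, hT'fin, hT'S, hBT'⟩ :=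
      hz.2 A₀ S₀ hA₀ hS₀ hlub₀ hglb₀
    set V : Set P := ⋂ a ∈ B ∪ B', ⋂ s ∈ T ∪ T', u a s with hV
    have hVo : V ∈ mnTop M N :=
      biInter_mem_mnTop (hBfin.union hB'fin) (fun a _ =>
        biInter_mem_mnTop (hTfin.union hT'fin) (fun s _ => hu1 a s))
    have hzV : z ∈ V :=
      Set.mem_iInter₂.2 fun a _ => Set.mem_iInter₂.2 fun s _ => hu2 a s
    have hVmem : ∀ w ∈ V, ∀ a ∈ B ∪ B', ∀ s ∈ T ∪ T', w ∈ Set.Icc a s := by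
      intro w hw a ha s hs
      have hwin : w ∈ u a s := Set.mem_iInter₂.1 (Set.mem_iInter₂.1 hw a ha) s hs
      exact hu3 a s (Set.union_subset hBA hB'A ha) (Set.union_subset hTS hT'S hs) hwin
    have hVIci : V ⊆ Set.Ici x := by
      intro w hw
      refine hBT ⟨fun b hb => ?_, fun t ht => ?_⟩
      · exact (hVmem w hw b (Set.mem_union_left _ hb) hTne.choose
          (Set.mem_union_left _ hTne.choose_spec)).1
      · exact (hVmem w hw hBne.choose (Set.mem_union_left _ hBne.choose_spec) t
          (Set.mem_union_left _ ht)).2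
    have hVIic : V ⊆ Set.Iic y := by
      intro w hw
      refine hBT' ⟨fun b hb => ?_, fun t ht => ?_⟩
      · exact (hVmem w hw b (Set.mem_union_right _ hb) hT'ne.choose
          (Set.mem_union_right _ hT'ne.choose_spec)).1
      · exact (hVmem w hw hB'ne.choose (Set.mem_union_right _ hB'ne.choose_spec) t
          (Set.mem_union_right _ ht)).2
    obtain ⟨i₀, hi₀⟩ := hVo I r f z hdir hconv hzV
    exact ⟨i₀, fun i hi =>
      ⟨lemA hM hN hVo hVIci (hi₀ i hi), lemB hM hN hVo hVIic (hi₀ i hi)⟩⟩
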